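/- Every divergence-free element of the face element space W²_p is the curl of an element of the Nédélec space W¹_p. -/

import Mathlib

open MeasureTheory

/-- Partial derivative of a scalar function on ℝ³. -/
noncomputable def pd3 (f : (Fin 3 → ℝ) → ℝ) (i : Fin 3) (x : Fin 3 → ℝ) : ℝ :=
  fderiv ℝ f x (Pi.single i 1)

/-- Curl of a vector field on ℝ³. -/
noncomputable def curl3 (u : (Fin 3 → ℝ) → (Fin 3 → ℝ)) (x : Fin 3 → ℝ) : Fin 3 → ℝ :=
  ![pd3 (fun y => u y 2) 1 x - pd3 (fun y => u y 1) 2 x,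
    pd3 (fun y => u y 0) 2 x - pd3 (fun y => u y 2) 0 x,
    pd3 (fun y => u y 1) 0 x - pd3 (fun y => u y 0) 1 x]

/-- Divergence of a vector field on ℝ³. -/
noncomputable def div3 (u : (Fin 3 → ℝ) → (Fin 3 → ℝ)) (x : Fin 3 → ℝ) : ℝ :=
  ∑ i, pd3 (fun y => u y i) i x

/-- Gradient of a scalar field on ℝ³. -/
noncomputable def grad3 (f : (Fin 3 → ℝ) → ℝ) (x : Fin 3 → ℝ) : Fin 3 → ℝ :=
  fun i => pd3 f i x

/-- Cross product in ℝ³. -/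
def cross3 (a b : Fin 3 → ℝ) : Fin 3 → ℝ :=
  ![a 1 * b 2 - a 2 * b 1, a 2 * b 0 - a 0 * b 2, a 0 * b 1 - a 1 * b 0]

/-- Euclidean dot product in ℝ³. -/
def dot3 (a b : Fin 3 → ℝ) : ℝ := ∑ i, a i * b i

/-- `f` is (given by) a polynomial of total degree ≤ p. -/
def IsPoly3 (p : ℕ) (f : (Fin 3 → ℝ) → ℝ) : Prop :=
  ∃ q : MvPolynomial (Fin 3) ℝ, q.totalDegree ≤ p ∧ ∀ x, f x = MvPolynomial.eval x q

/-- Vector field whose components are polynomials of total degree ≤ p. -/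
def IsPolyVec3 (p : ℕ) (u : (Fin 3 → ℝ) → (Fin 3 → ℝ)) : Prop :=
  ∀ i, IsPoly3 p (fun x => u x i)

/-- First-family Nédélec space of degree p (as a set of vector fields). -/
def NedelecW1 (p : ℕ) : Set ((Fin 3 → ℝ) → (Fin 3 → ℝ)) :=
  {v | ∃ P Q, IsPolyVec3 p P ∧ IsPolyVec3 p Q ∧ ∀ x, v x = P x + cross3 (Q x) x}

/-- Face-element (second family) space of degree p. -/
def NedelecW2 (p : ℕ) : Set ((Fin 3 → ℝ) → (Fin 3 → ℝ)) :=
  {v | ∃ P q, IsPolyVec3 p P ∧ IsPoly3 p q ∧ ∀ x, v x = P x + q x • x}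

/-- Poincaré lifting with center a. -/
noncomputable def Rlift (a : Fin 3 → ℝ) (u : (Fin 3 → ℝ) → (Fin 3 → ℝ))
    (x : Fin 3 → ℝ) : Fin 3 → ℝ :=
  cross3 (∫ t in (0:ℝ)..1, t • u (a + t • (x - a))) (x - a)

/-- Degree-2 Poincaré lifting with center a. -/
noncomputable def Dlift (a : Fin 3 → ℝ) (u : (Fin 3 → ℝ) → ℝ)
    (x : Fin 3 → ℝ) : Fin 3 → ℝ :=
  (∫ t in (0:ℝ)..1, t ^ 2 * u (a + t • (x - a))) • (x - a)


section Helpers9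
open MvPolynomial

abbrev P3 := MvPolynomial (Fin 3) ℝ

lemma pd_hasFDeriv (f : P3) (x : Fin 3 → ℝ) :
    HasFDerivAt (fun y => eval y f)
      (∑ j, eval x (pderiv j f) • ContinuousLinearMap.proj (R := ℝ) (φ := fun _ : Fin 3 => ℝ) j) x := by
  induction f using MvPolynomial.induction_on with
  | C a =>
      simp only [eval_C, pderiv_C, map_zero, zero_smul, Finset.sum_const_zero]
      exact hasFDerivAt_const a x
  | add f g hf hg =>
      simp only [eval_add, map_add, add_smul, Finset.sum_add_distrib]
      exact hf.add hg
  | mul_X f i hf =>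
      have h1 := hf.mul (hasFDerivAt_apply i x)
      simp only [eval_mul, eval_X]
      refine h1.congr_fderiv ?_
      ext v
      simp only [ContinuousLinearMap.sum_apply, ContinuousLinearMap.smul_apply,
        ContinuousLinearMap.proj_apply, ContinuousLinearMap.add_apply, smul_eq_mul]
      fin_cases i <;>
        simp [Fin.sum_univ_three, pderiv_mul, pderiv_X, Pi.single_apply] <;> ring

lemma pd3_eval (f : P3) (i : Fin 3) (x : Fin 3 → ℝ) :
    pd3 (fun y => eval y f) i x = eval x (pderiv i f) := by
  rw [pd3, (pd_hasFDeriv f x).fderiv]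
  simp [Pi.single_apply, Finset.sum_ite_eq']

noncomputable def pdv (V : Fin 3 → P3) : P3 := ∑ i, pderiv i (V i)

noncomputable def pcl (V : Fin 3 → P3) : Fin 3 → P3 :=
  ![pderiv 1 (V 2) - pderiv 2 (V 1), pderiv 2 (V 0) - pderiv 0 (V 2),
    pderiv 0 (V 1) - pderiv 1 (V 0)]

noncomputable def cx (Q : Fin 3 → P3) : Fin 3 → P3 :=
  ![Q 1 * X 2 - Q 2 * X 1, Q 2 * X 0 - Q 0 * X 2, Q 0 * X 1 - Q 1 * X 0]

lemma pderiv_comm3 (i j : Fin 3) (f : P3) :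
    pderiv i (pderiv j f) = pderiv j (pderiv i f) := by
  induction f using MvPolynomial.induction_on' with
  | add f g hf hg => simp [hf, hg]
  | monomial d c =>
      rcases eq_or_ne i j with rfl | hne
      · rfl
      · simp only [pderiv_monomial]
        have hji : (d - Finsupp.single j 1 : Fin 3 →₀ ℕ) i = d i := by
          simp [Finsupp.tsub_apply, Finsupp.single_apply, hne.symm]
        have hij : (d - Finsupp.single i 1 : Fin 3 →₀ ℕ) j = d j := by
          simp [Finsupp.tsub_apply, Finsupp.single_apply, hne]
        rw [hji, hij, tsub_tsub, tsub_tsub, add_comm]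
        congr 1
        ring

lemma pdv_pcl (W : Fin 3 → P3) : pdv (pcl W) = 0 := by
  simp only [pdv, Fin.sum_univ_three, pcl]
  simp only [Matrix.cons_val_zero, Matrix.cons_val_one, Matrix.head_cons, map_sub,
    Matrix.cons_val_two, Matrix.tail_cons]
  rw [pderiv_comm3 0 1, pderiv_comm3 0 2, pderiv_comm3 1 2]
  ring

lemma X_mul_pderiv_monomial (i : Fin 3) (d : Fin 3 →₀ ℕ) (c : ℝ) :
    X i * pderiv i (monomial d c) = monomial d (c * d i) := by
  rw [pderiv_monomial]
  rcases Nat.eq_zero_or_pos (d i) with h0 | hpos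
  · simp [h0]
  · rw [X, monomial_mul, one_mul, add_tsub_cancel_of_le]
    rwa [Finsupp.single_le_iff]

lemma sum_univ_eq_degree (d : Fin 3 →₀ ℕ) : ∑ i, d i = d.degree := by
  rw [Finsupp.degree]
  exact (Finset.sum_subset (Finset.subset_univ _)
    (fun x _ hx => Finsupp.notMem_support_iff.mp hx)).symm

lemma euler3 {n : ℕ} {f : P3} (hf : f.IsHomogeneous n) :
    ∑ i, X i * pderiv i f = (n : ℝ) • f := by
  calc ∑ i, X i * pderiv i f
      = ∑ d ∈ f.support, ∑ i : Fin 3, X i * pderiv i (monomial d (coeff d f)) := by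
        rw [Finset.sum_comm]
        refine Finset.sum_congr rfl fun i _ => ?_
        conv_lhs => rw [f.as_sum]
        rw [map_sum, Finset.mul_sum]
    _ = ∑ d ∈ f.support, (n : ℝ) • monomial d (coeff d f) := by
        refine Finset.sum_congr rfl fun d hd => ?_
        have hdeg : d.degree = n := by
          have := hf (mem_support_iff.mp hd)
          rw [Finsupp.degree_eq_weight_one]; exact this
        simp only [_root_.X_mul_pderiv_monomial]
        rw [← map_sum (monomial d), ← Finset.mul_sum, smul_monomial, ← Nat.cast_sum,
          sum_univ_eq_degree, hdeg, smul_eq_mul, mul_comm]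
    _ = (n : ℝ) • f := by rw [← Finset.smul_sum, ← f.as_sum]

lemma degree_mono3 {a b : Fin 3 →₀ ℕ} (h : a ≤ b) : a.degree ≤ b.degree := by
  rw [← sum_univ_eq_degree, ← sum_univ_eq_degree]
  exact Finset.sum_le_sum fun i _ => Finsupp.le_def.mp h i

lemma degree_sub_single {d : Fin 3 →₀ ℕ} {i : Fin 3} (h : 0 < d i) :
    (d - Finsupp.single i 1).degree = d.degree - 1 := by
  have hle : Finsupp.single i 1 ≤ d := by rwa [Finsupp.single_le_iff]
  have h2 : (d - Finsupp.single i 1) + Finsupp.single i 1 = d := tsub_add_cancel_of_le hle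
  have h3 : ((d - Finsupp.single i 1) + Finsupp.single i 1).degree
      = (d - Finsupp.single i 1).degree + (Finsupp.single i 1).degree := by
    rw [← sum_univ_eq_degree, ← sum_univ_eq_degree, ← sum_univ_eq_degree,
      ← Finset.sum_add_distrib]
    exact Finset.sum_congr rfl fun j _ => rfl
  have h4 : (Finsupp.single i 1).degree = 1 := by
    rw [← sum_univ_eq_degree]
    simp [Finsupp.single_apply]
  have h5 : ((d - Finsupp.single i 1) + Finsupp.single i 1).degree = d.degree := by rw [h2]
  omega

lemma totalDegree_pderiv_le (i : Fin 3) (f : P3) :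
    (pderiv i f).totalDegree ≤ f.totalDegree := by
  conv_lhs => rw [f.as_sum]
  rw [map_sum]
  refine totalDegree_finsetSum_le fun d hd => ?_
  rw [pderiv_monomial]
  refine (totalDegree_monomial_le _ _).trans ?_
  refine le_trans ?_ (le_totalDegree hd)
  exact degree_mono3 tsub_le_self

lemma totalDegree_X_mul_pderiv_le (i : Fin 3) (f : P3) :
    (X i * pderiv i f).totalDegree ≤ f.totalDegree := by
  conv_lhs => rw [f.as_sum]
  rw [map_sum, Finset.mul_sum]
  refine totalDegree_finsetSum_le fun d hd => ?_
  rw [X_mul_pderiv_monomial]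
  exact (totalDegree_monomial_le _ _).trans (le_totalDegree hd)

lemma isHomogeneous_pderiv {n : ℕ} {f : P3} (hf : f.IsHomogeneous n) (i : Fin 3) :
    (pderiv i f).IsHomogeneous (n - 1) := by
  rw [← mem_homogeneousSubmodule, f.as_sum, map_sum]
  refine Submodule.sum_mem _ fun d hd => ?_
  rw [pderiv_monomial, mem_homogeneousSubmodule]
  rcases Nat.eq_zero_or_pos (d i) with h0 | hpos
  · simp only [h0, Nat.cast_zero, mul_zero, map_zero]
    exact isHomogeneous_zero _ _ _
  · refine isHomogeneous_monomial _ ?_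
    have hdeg : d.degree = n := by
      have := hf (mem_support_iff.mp hd)
      rw [Finsupp.degree_eq_weight_one]; exact this
    rw [degree_sub_single hpos, hdeg]

lemma pcl_cx (Q : Fin 3 → P3) (l : Fin 3) :
    pcl (cx Q) l = ((∑ k, X k * pderiv k (Q l)) + Q l + Q l) - pdv Q * X l := by
  have key : ∀ a b c : P3, ∀ i j : Fin 3, i ≠ j → True := fun _ _ _ _ _ _ => trivial
  have h0 : pcl (cx Q) 0 = ((∑ k, X k * pderiv k (Q 0)) + Q 0 + Q 0) - pdv Q * X 0 := by
    simp only [pcl, cx, pdv, Fin.sum_univ_three, Matrix.cons_val_zero, Matrix.cons_val_one,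
      Matrix.head_cons, Matrix.cons_val_two, Matrix.tail_cons, map_sub, pderiv_mul,
      pderiv_X, Pi.single_apply, Fin.isValue]
    norm_num [Fin.ext_iff]
    ring
  have h1 : pcl (cx Q) 1 = ((∑ k, X k * pderiv k (Q 1)) + Q 1 + Q 1) - pdv Q * X 1 := by
    simp only [pcl, cx, pdv, Fin.sum_univ_three, Matrix.cons_val_zero, Matrix.cons_val_one,
      Matrix.head_cons, Matrix.cons_val_two, Matrix.tail_cons, map_sub, pderiv_mul,
      pderiv_X, Pi.single_apply, Fin.isValue]
    norm_num [Fin.ext_iff]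
    ring
  have h2 : pcl (cx Q) 2 = ((∑ k, X k * pderiv k (Q 2)) + Q 2 + Q 2) - pdv Q * X 2 := by
    simp only [pcl, cx, pdv, Fin.sum_univ_three, Matrix.cons_val_zero, Matrix.cons_val_one,
      Matrix.head_cons, Matrix.cons_val_two, Matrix.tail_cons, map_sub, pderiv_mul,
      pderiv_X, Pi.single_apply, Fin.isValue]
    norm_num [Fin.ext_iff]
    ring
  fin_cases l
  · exact h0
  · exact h1
  · exact h2

lemma fin3_cases {P : Fin 3 → Prop} (h0 : P 0) (h1 : P 1) (h2 : P 2) : ∀ i, P i := by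
  intro i; fin_cases i; exacts [h0, h1, h2]

lemma comp_fun_eq {u : (Fin 3 → ℝ) → (Fin 3 → ℝ)} {W : Fin 3 → P3}
    (h : ∀ x i, u x i = eval x (W i)) (i : Fin 3) :
    (fun y => u y i) = fun y => eval y (W i) := funext fun y => h y i

lemma div3_eval {u : (Fin 3 → ℝ) → (Fin 3 → ℝ)} {W : Fin 3 → P3}
    (h : ∀ x i, u x i = eval x (W i)) (x : Fin 3 → ℝ) :
    div3 u x = eval x (pdv W) := by
  unfold div3 pdv
  rw [map_sum]
  exact Finset.sum_congr rfl fun i _ => by rw [comp_fun_eq h i, pd3_eval]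

lemma curl3_eval {u : (Fin 3 → ℝ) → (Fin 3 → ℝ)} {W : Fin 3 → P3}
    (h : ∀ x i, u x i = eval x (W i)) (x : Fin 3 → ℝ) (i : Fin 3) :
    curl3 u x i = eval x (pcl W i) := by
  refine fin3_cases (P := fun i => curl3 u x i = eval x (pcl W i)) ?_ ?_ ?_ i <;>
  · show _ - _ = _
    rw [comp_fun_eq h, comp_fun_eq h, pd3_eval, pd3_eval, ← map_sub]
    rfl

lemma cx_eval {Q : Fin 3 → P3} {q : (Fin 3 → ℝ) → (Fin 3 → ℝ)}
    (hq : ∀ x i, q x i = eval x (Q i)) (x : Fin 3 → ℝ) (i : Fin 3) :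
    cross3 (q x) x i = eval x (cx Q i) := by
  refine fin3_cases (P := fun i => cross3 (q x) x i = eval x (cx Q i)) ?_ ?_ ?_ i <;>
  · simp only [cross3, cx, Matrix.cons_val_zero, Matrix.cons_val_one, Matrix.head_cons,
      Matrix.cons_val_two, Matrix.tail_cons, map_sub, map_mul, eval_X, hq]

lemma pcl_add (A B : Fin 3 → P3) (l : Fin 3) :
    pcl (fun i => A i + B i) l = pcl A l + pcl B l := by
  refine fin3_cases (P := fun l => pcl (fun i => A i + B i) l = pcl A l + pcl B l) ?_ ?_ ?_ l <;>
  · show _ - _ = (_ - _) + (_ - _)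
    rw [map_add, map_add]
    ring

lemma pcl_deg {A : Fin 3 → P3} {p : ℕ} (hA : ∀ i, (A i).totalDegree ≤ p) (l : Fin 3) :
    (pcl A l).totalDegree ≤ p := by
  refine fin3_cases (P := fun l => (pcl A l).totalDegree ≤ p) ?_ ?_ ?_ l <;>
  · refine le_trans (totalDegree_sub _ _) (max_le ?_ ?_) <;>
      exact le_trans (totalDegree_pderiv_le _ _) (hA _)

lemma sum_homComp_lt {f : P3} {N : ℕ} (h : f.totalDegree < N) :
    ∑ k ∈ Finset.range N, homogeneousComponent k f = f := by
  rw [← Finset.sum_subset (Finset.range_subset_range.mpr h)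
    (fun k _ hk => homogeneousComponent_eq_zero k f (by
      simp only [Finset.mem_range, not_lt] at hk; omega))]
  exact f.sum_homogeneousComponent

lemma dir_supset (p : ℕ) (v : (Fin 3 → ℝ) → (Fin 3 → ℝ))
    (h : ∃ u ∈ NedelecW1 p, ∀ x, v x = curl3 u x) :
    v ∈ NedelecW2 p ∧ ∀ x, div3 v x = 0 := by
  obtain ⟨u, ⟨Pu, Qu, hPu, hQu, hux⟩, hv⟩ := h
  choose PP hPPd hPPe using hPu
  choose QQ hQQd hQQe using hQu
  have hQe : ∀ x i, Qu x i = eval x (QQ i) := fun x i => hQQe i x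
  have hPe : ∀ x i, Pu x i = eval x (PP i) := fun x i => hPPe i x
  set W : Fin 3 → P3 := fun i => PP i + cx QQ i with hWdef
  have hW : ∀ x i, u x i = eval x (W i) := by
    intro x i
    rw [hux x]
    show Pu x i + cross3 (Qu x) x i = _
    rw [hPe x i, cx_eval hQe x i, hWdef]
    simp [map_add]
  have hvW : ∀ x i, v x i = eval x (pcl W i) := fun x i => by
    rw [hv x]; exact curl3_eval hW x i
  constructor
  · set P2 : Fin 3 → P3 := fun l => pcl PP l + ((∑ k, X k * pderiv k (QQ l)) + QQ l + QQ l)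
      with hP2
    set q2 : P3 := -(pdv QQ) with hq2
    have hkey : ∀ l, pcl W l = P2 l + q2 * X l := by
      intro l
      rw [hWdef]
      rw [show (fun i => PP i + cx QQ i) = fun i => PP i + cx QQ i from rfl]
      rw [pcl_add PP (cx QQ) l, pcl_cx QQ l, hP2, hq2]
      ring
    refine ⟨fun x l => eval x (P2 l), fun x => eval x q2, ?_, ?_, ?_⟩
    · intro l
      refine ⟨P2 l, ?_, fun x => rfl⟩
      rw [hP2]
      refine le_trans (totalDegree_add _ _) (max_le (pcl_deg hPPd l) ?_)
      refine le_trans (totalDegree_add _ _) (max_le ?_ (hQQd l))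
      refine le_trans (totalDegree_add _ _) (max_le ?_ (hQQd l))
      exact totalDegree_finsetSum_le fun k _ =>
        le_trans (totalDegree_X_mul_pderiv_le k (QQ l)) (hQQd l)
    · refine ⟨q2, ?_, fun x => rfl⟩
      rw [hq2, totalDegree_neg]
      exact totalDegree_finsetSum_le fun i _ =>
        le_trans (totalDegree_pderiv_le i (QQ i)) (hQQd i)
    · intro x
      funext l
      show v x l = eval x (P2 l) + eval x q2 * x l
      rw [hvW x l, hkey l]
      simp [map_add, map_mul, eval_X]
  · intro x
    rw [div3_eval hvW x, pdv_pcl, map_zero]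

lemma dir_subset (p : ℕ) (v : (Fin 3 → ℝ) → (Fin 3 → ℝ))
    (h : v ∈ NedelecW2 p ∧ ∀ x, div3 v x = 0) :
    ∃ u ∈ NedelecW1 p, ∀ x, v x = curl3 u x := by
  obtain ⟨⟨Pv, qv, hPv, hqv, hvx⟩, hdiv⟩ := h
  choose PP hPPd hPPe using hPv
  have hPe : ∀ x i, Pv x i = eval x (PP i) := fun x i => hPPe i x
  obtain ⟨qq, hqqd, hqqe⟩ := hqv
  set V : Fin 3 → P3 := fun l => PP l + qq * X l with hVdef
  have hV : ∀ x i, v x i = eval x (V i) := by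
    intro x i
    rw [hvx x]
    show Pv x i + qv x * x i = _
    rw [hPe x i, hqqe x, hVdef]
    simp [map_add, map_mul, eval_X]
  have hdivV : pdv V = 0 := by
    apply MvPolynomial.funext
    intro x
    rw [← div3_eval hV x, map_zero]
    exact hdiv x
  -- homogeneous pieces
  set vk : ℕ → Fin 3 → P3 := fun k l =>
    homogeneousComponent k (PP l) + (if k = 0 then 0 else homogeneousComponent (k-1) qq) * X l
    with hvkdef
  have hvkhom : ∀ k l, (vk k l).IsHomogeneous k := by
    intro k l
    match k with
    | 0 =>
        show ((homogeneousComponent 0) (PP l)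
          + (if (0:ℕ) = 0 then 0 else (homogeneousComponent (0-1)) qq) * X l).IsHomogeneous 0
        rw [if_pos rfl, zero_mul, add_zero]
        exact homogeneousComponent_isHomogeneous 0 (PP l)
    | Nat.succ j =>
        show ((homogeneousComponent (j+1)) (PP l)
          + (if j+1 = 0 then 0 else (homogeneousComponent (j+1-1)) qq) * X l).IsHomogeneous (j+1)
        rw [if_neg (Nat.succ_ne_zero j), Nat.add_sub_cancel]
        exact ((homogeneousComponent_isHomogeneous (j+1) (PP l))).add
          ((homogeneousComponent_isHomogeneous j qq).mul (isHomogeneous_X ℝ l))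
  have hVsum : ∀ l, ∑ k ∈ Finset.range (p+2), vk k l = V l := by
    intro l
    show ∑ k ∈ Finset.range (p+2), (homogeneousComponent k (PP l)
      + (if k = 0 then 0 else homogeneousComponent (k-1) qq) * X l) = V l
    rw [Finset.sum_add_distrib, ← Finset.sum_mul]
    rw [sum_homComp_lt (lt_of_le_of_lt (hPPd l) (by omega))]
    rw [Finset.sum_range_succ']
    rw [Finset.sum_congr rfl (fun k _ => show (if k+1 = 0 then (0:P3)
        else homogeneousComponent (k+1-1) qq) = homogeneousComponent k qq by
      rw [if_neg (Nat.succ_ne_zero k), Nat.add_sub_cancel])]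
    rw [if_pos rfl]
    rw [sum_homComp_lt (lt_of_le_of_lt hqqd (by omega)), add_zero, hVdef]
  set Dk : ℕ → P3 := fun k => ∑ i, pderiv i (vk k i) with hDkdef
  have hDhom : ∀ k, (Dk k).IsHomogeneous (k-1) := by
    intro k
    rw [← mem_homogeneousSubmodule, hDkdef]
    exact Submodule.sum_mem _ fun i _ =>
      (mem_homogeneousSubmodule _ _).mpr (isHomogeneous_pderiv (hvkhom k i) i)
  have hD0 : Dk 0 = 0 := by
    rw [hDkdef]
    refine Finset.sum_eq_zero fun i _ => ?_
    show pderiv i ((homogeneousComponent 0) (PP i)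
      + (if (0:ℕ) = 0 then 0 else (homogeneousComponent (0-1)) qq) * X i) = 0
    rw [if_pos rfl, zero_mul, add_zero, homogeneousComponent_zero]
    exact pderiv_C
  have hDsum : ∑ k ∈ Finset.range (p+2), Dk k = 0 := by
    have hstep : ∀ i : Fin 3, ∑ k ∈ Finset.range (p+2), pderiv i (vk k i) = pderiv i (V i) :=
      fun i => by rw [← map_sum, hVsum i]
    show ∑ k ∈ Finset.range (p+2), ∑ i : Fin 3, pderiv i (vk k i) = 0
    rw [Finset.sum_comm, Finset.sum_congr rfl (fun i _ => hstep i)]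
    exact hdivV
  have hDzero : ∀ k, k ∈ Finset.range (p+2) → Dk k = 0 := by
    intro k hk
    match k with
    | 0 => exact hD0
    | Nat.succ j =>
        have h := congrArg (homogeneousComponent j) hDsum
        rw [map_sum, map_zero] at h
        rw [Finset.sum_eq_single (j+1)] at h
        · rwa [homogeneousComponent_of_mem ((mem_homogeneousSubmodule _ _).mpr (hDhom (j+1))),
            if_pos (by omega)] at h
        · intro b _ hbne
          match b with
          | 0 => rw [hD0, map_zero]
          | Nat.succ m =>
              rw [homogeneousComponent_of_mem
                ((mem_homogeneousSubmodule _ _).mpr (hDhom (m+1))), if_neg (by omega)]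
        · intro hnot
          exact absurd hk hnot
  -- the vector potential coefficient polynomials
  set QQ : Fin 3 → P3 := fun l => ∑ k ∈ Finset.range (p+1), ((k : ℝ)+2)⁻¹ • vk k l with hQQdef
  have hcast : ∀ k : ℕ, ((k : ℝ) + 2) ≠ 0 := fun k => by positivity
  -- top homogeneous piece vanishes
  have htop : ∀ l, vk (p+1) l = 0 := by
    have hg := euler3 (homogeneousComponent_isHomogeneous p qq)
    have hPtop : ∀ l, homogeneousComponent (p+1) (PP l) = 0 := fun l =>
      homogeneousComponent_eq_zero _ _ (lt_of_le_of_lt (hPPd l) (by omega))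
    have hvk_top : ∀ l, vk (p+1) l = homogeneousComponent p qq * X l := by
      intro l
      show (homogeneousComponent (p+1)) (PP l)
        + (if p+1 = 0 then 0 else (homogeneousComponent (p+1-1)) qq) * X l = _
      rw [if_neg (Nat.succ_ne_zero p), Nat.add_sub_cancel, hPtop l, zero_add]
    have hDtop : Dk (p+1) = ((p : ℝ) + 3) • homogeneousComponent p qq := by
      rw [hDkdef]
      show ∑ i : Fin 3, pderiv i (vk (p+1) i) = _
      calc ∑ i : Fin 3, pderiv i (vk (p+1) i)
          = ∑ i : Fin 3, (X i * pderiv i (homogeneousComponent p qq)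
              + homogeneousComponent p qq) := by
            refine Finset.sum_congr rfl fun i _ => ?_
            rw [hvk_top i, pderiv_mul, pderiv_X_self, mul_one, mul_comm]
        _ = (∑ i : Fin 3, X i * pderiv i (homogeneousComponent p qq))
              + (3 : ℕ) • homogeneousComponent p qq := by
            rw [Finset.sum_add_distrib, Finset.sum_const, Finset.card_univ, Fintype.card_fin]
        _ = ((p : ℝ) + 3) • homogeneousComponent p qq := by
            rw [hg, ← Nat.cast_smul_eq_nsmul ℝ, ← add_smul]
            norm_num
    have hDz : Dk (p+1) = 0 := hDzero (p+1) (by simp)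
    rw [hDz] at hDtop
    have hq0 : homogeneousComponent p qq = 0 := by
      have h' := congrArg (fun z : P3 => ((p : ℝ) + 3)⁻¹ • z) hDtop.symm
      simpa [smul_smul, inv_mul_cancel₀ (show ((p:ℝ)+3) ≠ 0 by positivity)] using h'
    intro l
    rw [hvk_top l, hq0, zero_mul]
  -- key identity : pcl (cx QQ) = V
  have hkey : ∀ l, pcl (cx QQ) l = V l := by
    intro l
    rw [pcl_cx]
    have hpdvQQ : pdv QQ = 0 := by
      rw [pdv]
      have : ∀ i, pderiv i (QQ i) = ∑ k ∈ Finset.range (p+1), ((k : ℝ)+2)⁻¹ • pderiv i (vk k i) := by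
        intro i
        rw [hQQdef]
        rw [map_sum]
        exact Finset.sum_congr rfl fun k _ => by rw [Derivation.map_smul]
      rw [Finset.sum_congr rfl fun i _ => this i, Finset.sum_comm]
      refine Finset.sum_eq_zero fun k hk => ?_
      rw [← Finset.smul_sum]
      have hz : (∑ i : Fin 3, pderiv i (vk k i)) = 0 := hDzero k (by simp at hk ⊢; omega)
      rw [hz, smul_zero]
    have hmain : ((∑ k, X k * pderiv k (QQ l)) + QQ l + QQ l)
        = ∑ k ∈ Finset.range (p+1), vk k l := by
      have hsum : ∀ i, X i * pderiv i (QQ l)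
          = ∑ k ∈ Finset.range (p+1), ((k : ℝ)+2)⁻¹ • (X i * pderiv i (vk k l)) := by
        intro i
        rw [hQQdef, map_sum, Finset.mul_sum]
        exact Finset.sum_congr rfl fun k _ => by rw [Derivation.map_smul, mul_smul_comm]
      rw [Finset.sum_congr rfl fun i _ => hsum i, Finset.sum_comm, hQQdef]
      rw [← Finset.sum_add_distrib, ← Finset.sum_add_distrib]
      refine Finset.sum_congr rfl fun k _ => ?_
      rw [← Finset.smul_sum, euler3 (hvkhom k l)]
      have h2 : ((k : ℝ) + 2) • vk k l = (k : ℝ) • vk k l + vk k l + vk k l := by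
        rw [add_smul, two_smul, ← add_assoc]
      rw [← smul_add, ← smul_add, ← h2, smul_smul, inv_mul_cancel₀ (hcast k), one_smul]
    rw [hmain, hpdvQQ, zero_mul, sub_zero]
    rw [← hVsum l, Finset.sum_range_succ (f := fun k => vk k l) (n := p+1), htop l, add_zero]
  -- assemble
  refine ⟨fun x => cross3 (fun l => eval x (QQ l)) x, ⟨fun _ => 0, fun x l => eval x (QQ l),
    ?_, ?_, ?_⟩, ?_⟩
  · intro i
    exact ⟨0, by simp [totalDegree_zero], fun x => by simp⟩
  · intro l
    refine ⟨QQ l, ?_, fun x => rfl⟩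
    rw [hQQdef]
    refine totalDegree_finsetSum_le fun k hk => ?_
    refine le_trans (totalDegree_smul_le _ _) ?_
    refine le_trans (hvkhom k l).totalDegree_le ?_
    simp at hk; omega
  · intro x
    funext l
    show _ = (0 : ℝ) + _
    rw [zero_add]
  · intro x
    funext i
    have hu : ∀ y j, cross3 (fun l => eval y (QQ l)) y j = eval y (cx QQ j) :=
      fun y j => cx_eval (q := fun y l => eval y (QQ l)) (fun _ _ => rfl) y j
    rw [curl3_eval (W := fun j => cx QQ j) (fun y j => hu y j) x i]
    rw [show (fun j => cx QQ j) = cx QQ from rfl, hkey i]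
    exact hV x i

end Helpers9

/-- `{v ∈ W²_p : div v = 0} = curl(W¹_p)`. -/

theorem divfree_W2_eq_curl_W1 (p : ℕ) :
    {v | v ∈ NedelecW2 p ∧ ∀ x, div3 v x = 0} =
      {v | ∃ u ∈ NedelecW1 p, ∀ x, v x = curl3 u x} :=
  Set.ext fun v => ⟨fun h => dir_subset p v h, fun h => dir_supset p v h⟩
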